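/- For the Gaussian kernel k_σ(u,x) = exp(-‖u-x‖²/(2σ)) on a compact set X ⊆ ℝ^d, and a continuous nonnegative function l, the k-transform l^{k_σ}(x) := sup_{u∈X} l(u)·k_σ(u,x) converges pointwise to l(x) as σ → 0⁺, provided l is continuous at x. -/

import Mathlib

open Real Filter

/-- For the Gaussian kernel on a compact set `X ⊆ ℝ^d` and a continuous
nonnegative function `l`, the k-transform converges pointwise to `l x`
as the bandwidth `σ → 0⁺`, at every point `x ∈ X` where `l` is continuous. -/
theorem ktransform_tendsto_of_bandwidth_to_zero {d : ℕ}
    (X : Set (EuclideanSpace ℝ (Fin d))) (hX : IsCompact X) (hXne : X.Nonempty)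
    (l : EuclideanSpace ℝ (Fin d) → ℝ)
    (hl_cont : ContinuousOn l X) (hl_nonneg : ∀ u ∈ X, 0 ≤ l u)
    (x : EuclideanSpace ℝ (Fin d)) (hx : x ∈ X)
    (hl_cont_x : ContinuousAt l x) :
    Tendsto (fun σ : ℝ => ⨆ u : X, l u * Real.exp (-‖(u : EuclideanSpace ℝ (Fin d)) - x‖ ^ 2 / (2 * σ)))
      (nhdsWithin 0 (Set.Ioi 0)) (nhds (l x)) := by
  obtain ⟨m, hmX, hm⟩ := hX.exists_isMaxOn hXne hl_cont
  set M := l m with hM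
  have hM0 : 0 ≤ M := hl_nonneg m hmX
  have hxle : l x ≤ M := hm hx
  haveI : Nonempty X := hXne.to_subtype
  have hexple : ∀ (σ : ℝ) (u : EuclideanSpace ℝ (Fin d)), 0 < σ →
      Real.exp (-‖u - x‖ ^ 2 / (2 * σ)) ≤ 1 := by
    intro σ u hσ
    apply Real.exp_le_one_iff.2
    apply div_nonpos_of_nonpos_of_nonneg
    · simpa using sq_nonneg ‖u - x‖
    · positivity
  have hbdd : ∀ σ : ℝ, 0 < σ →
      BddAbove (Set.range fun u : X =>
        l u * Real.exp (-‖(u : EuclideanSpace ℝ (Fin d)) - x‖ ^ 2 / (2 * σ))) := by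
    intro σ hσ
    refine ⟨M, ?_⟩
    rintro _ ⟨u, rfl⟩
    calc l u * Real.exp (-‖(u : EuclideanSpace ℝ (Fin d)) - x‖ ^ 2 / (2 * σ))
        ≤ l u * 1 := by
          apply mul_le_mul_of_nonneg_left (hexple σ _ hσ) (hl_nonneg u u.2)
      _ = l u := mul_one _
      _ ≤ M := hm u.2
  have hlower : ∀ σ : ℝ, 0 < σ →
      l x ≤ ⨆ u : X, l u * Real.exp (-‖(u : EuclideanSpace ℝ (Fin d)) - x‖ ^ 2 / (2 * σ)) := by
    intro σ hσ
    have := le_ciSup (hbdd σ hσ) (⟨x, hx⟩ : X)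
    simpa using this
  rw [tendsto_order]
  constructor
  · intro a ha
    filter_upwards [self_mem_nhdsWithin] with σ hσ
    exact lt_of_lt_of_le ha (hlower σ hσ)
  · intro b hb
    set ε := b - l x with hε
    have hε0 : 0 < ε := by simp [hε]; linarith
    obtain ⟨δ, hδ0, hδ⟩ := Metric.continuousAt_iff.1 hl_cont_x (ε / 2) (by linarith)
    -- eventually M * exp (-δ^2/(2σ)) < ε/2
    have htend : Tendsto (fun σ : ℝ => M * Real.exp (-δ ^ 2 / (2 * σ)))
        (nhdsWithin 0 (Set.Ioi 0)) (nhds 0) := by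
      have h1 : Tendsto (fun σ : ℝ => -δ ^ 2 / (2 * σ)) (nhdsWithin 0 (Set.Ioi 0)) atBot := by
        have : Tendsto (fun σ : ℝ => σ⁻¹) (nhdsWithin 0 (Set.Ioi 0)) atTop :=
          tendsto_inv_nhdsGT_zero
        have h2 : Tendsto (fun σ : ℝ => (-δ ^ 2 / 2) * σ⁻¹) (nhdsWithin 0 (Set.Ioi 0)) atBot := by
          apply Tendsto.const_mul_atTop_of_neg _ this
          have : 0 < δ ^ 2 := by positivity
          linarith
        convert h2 using 2 with σ
        ring
      have := Real.tendsto_exp_atBot.comp h1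
      simpa using this.const_mul M
    have hev : ∀ᶠ σ in nhdsWithin 0 (Set.Ioi 0),
        M * Real.exp (-δ ^ 2 / (2 * σ)) < ε / 2 :=
      htend.eventually (Filter.Tendsto.eventually_lt_const (by linarith) tendsto_id) |>.mono
        (fun σ h => h)
    filter_upwards [hev, self_mem_nhdsWithin] with σ hσsmall hσpos
    have hσpos : (0 : ℝ) < σ := hσpos
    have hsup : (⨆ u : X, l u * Real.exp (-‖(u : EuclideanSpace ℝ (Fin d)) - x‖ ^ 2 / (2 * σ)))
        ≤ l x + ε / 2 := by
      apply ciSup_le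
      intro u
      by_cases hdu : dist (u : EuclideanSpace ℝ (Fin d)) x < δ
      · have hlu := hδ hdu
        have : l u < l x + ε / 2 := by
          have := abs_lt.1 (by simpa [Real.dist_eq] using hlu)
          linarith [this.2]
        calc l u * Real.exp (-‖(u : EuclideanSpace ℝ (Fin d)) - x‖ ^ 2 / (2 * σ))
            ≤ l u * 1 := mul_le_mul_of_nonneg_left (hexple σ _ hσpos) (hl_nonneg u u.2)
          _ = l u := mul_one _
          _ ≤ l x + ε / 2 := le_of_lt this
      · push_neg at hdu
        have hnorm : δ ≤ ‖(u : EuclideanSpace ℝ (Fin d)) - x‖ := by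
          rwa [← dist_eq_norm]
        have hsq : δ ^ 2 ≤ ‖(u : EuclideanSpace ℝ (Fin d)) - x‖ ^ 2 :=
          pow_le_pow_left₀ hδ0.le hnorm 2
        have hexp2 : Real.exp (-‖(u : EuclideanSpace ℝ (Fin d)) - x‖ ^ 2 / (2 * σ))
            ≤ Real.exp (-δ ^ 2 / (2 * σ)) := by
          apply Real.exp_le_exp.2
          gcongr
        have hlx0 : 0 ≤ l x := hl_nonneg x hx
        calc l u * Real.exp (-‖(u : EuclideanSpace ℝ (Fin d)) - x‖ ^ 2 / (2 * σ))
            ≤ M * Real.exp (-δ ^ 2 / (2 * σ)) := by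
              apply mul_le_mul (hm u.2) hexp2 (Real.exp_nonneg _) hM0
          _ ≤ ε / 2 := le_of_lt hσsmall
          _ ≤ l x + ε / 2 := by linarith
    linarith
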